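/- (Interval-width formula.) Suppose a continuous driver $\xi : [0,\tau] \to \mathbb{R}$ welds initial points $x_0 < \xi(0) < y_0$ at time $\tau$ (i.e., the flows $x(t), y(t)$ of $x_0, y_0$ under $\xi$ both hit $\xi$ exactly at time $\tau$). Let $I(t) := y(t) - x(t)$ and let $\alpha : [0, \tau) \to (0,1)$ be defined by $\xi(t) = (1 - \alpha(t)) x(t) + \alpha(t) y(t)$. Then for all $0 \leq t \leq \tau$, $I(t) = \sqrt{I(0)^2 - 4 \int_0^t \frac{ds}{\alpha(s)(1 - \alpha(s))}}$; in particular the integral converges as $t \to \tau$ and $I(0)^2 = \int_0^\tau \frac{4\, ds}{\alpha(s)(1-\alpha(s))}$. -/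

import Mathlib

open Set MeasureTheory intervalIntegral Filter

theorem statement9 (τ : ℝ) (hτ : 0 < τ) (ξ x y : ℝ → ℝ)
    (hξ : ContinuousOn ξ (Set.Icc 0 τ))
    (hb : x 0 < ξ 0 ∧ ξ 0 < y 0)
    (hodex : ∀ t ∈ Set.Ico (0:ℝ) τ, HasDerivWithinAt x (-2 / (x t - ξ t)) (Set.Ici 0) t)
    (hodey : ∀ t ∈ Set.Ico (0:ℝ) τ, HasDerivWithinAt y (-2 / (y t - ξ t)) (Set.Ici 0) t)
    (horder : ∀ t ∈ Set.Ico (0:ℝ) τ, x t < ξ t ∧ ξ t < y t)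
    (hcx : ContinuousOn x (Set.Icc 0 τ)) (hcy : ContinuousOn y (Set.Icc 0 τ))
    (hweldx : x τ = ξ τ) (hweldy : y τ = ξ τ) :
    MeasureTheory.IntegrableOn
        (fun s => 1 / (((ξ s - x s) / (y s - x s)) * (1 - (ξ s - x s) / (y s - x s))))
        (Set.Ioo 0 τ) ∧
      (∀ t ∈ Set.Icc (0:ℝ) τ,
        y t - x t = Real.sqrt ((y 0 - x 0) ^ 2 -
          4 * ∫ s in (0:ℝ)..t,
            1 / (((ξ s - x s) / (y s - x s)) * (1 - (ξ s - x s) / (y s - x s))))) ∧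
      (y 0 - x 0) ^ 2 = ∫ s in (0:ℝ)..τ,
          4 / (((ξ s - x s) / (y s - x s)) * (1 - (ξ s - x s) / (y s - x s))) := by
  set g : ℝ → ℝ := fun s => 1 / (((ξ s - x s) / (y s - x s)) * (1 - (ξ s - x s) / (y s - x s)))
    with hgdef
  set F : ℝ → ℝ := fun t => (y t - x t) ^ 2 with hFdef
  have hyx : ∀ s ∈ Set.Ico (0:ℝ) τ, 0 < y s - x s := by
    intro s hs; have h := horder s hs; linarith [h.1, h.2]
  have hα : ∀ s ∈ Set.Ico (0:ℝ) τ,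
      0 < (ξ s - x s) / (y s - x s) ∧ (ξ s - x s) / (y s - x s) < 1 := by
    intro s hs
    have h := horder s hs
    have h2 := hyx s hs
    constructor
    · exact div_pos (by linarith [h.1]) h2
    · rw [div_lt_one h2]; linarith [h.2]
  have hden : ∀ s ∈ Set.Ico (0:ℝ) τ,
      0 < ((ξ s - x s) / (y s - x s)) * (1 - (ξ s - x s) / (y s - x s)) := by
    intro s hs
    have h := hα s hs
    exact mul_pos h.1 (by linarith [h.2])
  have hgpos : ∀ s ∈ Set.Ico (0:ℝ) τ, 0 < g s := by
    intro s hs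
    simpa [hgdef] using one_div_pos.mpr (hden s hs)
  have hgcont : ContinuousOn g (Set.Ico 0 τ) := by
    have h1 : ContinuousOn (fun s => (ξ s - x s) / (y s - x s)) (Set.Ico 0 τ) := by
      refine ContinuousOn.div ((hξ.mono Ico_subset_Icc_self).sub (hcx.mono Ico_subset_Icc_self))
        ((hcy.mono Ico_subset_Icc_self).sub (hcx.mono Ico_subset_Icc_self)) ?_
      intro s hs; exact (hyx s hs).ne'
    refine ContinuousOn.div continuousOn_const (h1.mul (continuousOn_const.sub h1)) ?_
    intro s hs; exact (hden s hs).ne'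
  have hFcont : ContinuousOn F (Set.Icc 0 τ) := ((hcy.sub hcx).pow 2)
  have hFderiv : ∀ t ∈ Set.Ico (0:ℝ) τ, HasDerivWithinAt F (-4 * g t) (Set.Ici 0) t := by
    intro t ht
    have hd := ((hodey t ht).sub (hodex t ht)).pow 2
    refine HasDerivWithinAt.congr_deriv (f := F) hd ?_
    have h := horder t ht
    have h1 : x t - ξ t ≠ 0 := by linarith [h.1]
    have h2 : y t - ξ t ≠ 0 := by linarith [h.2]
    have h3 : y t - x t ≠ 0 := (hyx t ht).ne'
    have h1' : ξ t - x t ≠ 0 := by linarith [h.1]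
    have hA : ((ξ t - x t) / (y t - x t)) * (1 - (ξ t - x t) / (y t - x t))
        = ((ξ t - x t) * (y t - ξ t)) / ((y t - x t)^2) := by
      field_simp
      ring
    have hg_eq : g t = (y t - x t)^2 / ((ξ t - x t) * (y t - ξ t)) := by
      rw [hgdef]
      simp only
      rw [hA, one_div_div]
    rw [hg_eq]
    simp only [Pi.sub_apply]
    field_simp
    ring
  -- FTC on [0,t] for t < τ
  have hFTC : ∀ t, 0 ≤ t → t < τ → F t = F 0 - 4 * ∫ s in (0:ℝ)..t, g s := by
    intro t ht0 htτ
    have hsub : Set.Icc (0:ℝ) t ⊆ Set.Ico 0 τ := fun s hs => ⟨hs.1, lt_of_le_of_lt hs.2 htτ⟩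
    have hint : IntervalIntegrable (fun s => -4 * g s) MeasureTheory.volume 0 t := by
      apply ContinuousOn.intervalIntegrable
      rw [uIcc_of_le ht0]
      exact (continuousOn_const.mul hgcont).mono hsub
    have heq := intervalIntegral.integral_eq_sub_of_hasDeriv_right_of_le ht0
      (hFcont.mono (Icc_subset_Icc le_rfl htτ.le))
      (fun s hs => ((hFderiv s ⟨hs.1.le, hs.2.trans htτ⟩).hasDerivAt
        (Ici_mem_nhds hs.1)).hasDerivWithinAt) hint
    rw [intervalIntegral.integral_const_mul] at heq
    linarith [heq]
  have hbound : ∀ t, 0 ≤ t → t < τ → (∫ s in (0:ℝ)..t, g s) ≤ F 0 / 4 := by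
    intro t ht0 htτ
    have := hFTC t ht0 htτ
    have hF0 : 0 ≤ F t := sq_nonneg _
    linarith
  -- integrability up to τ
  have hIntIoc : MeasureTheory.IntegrableOn g (Set.Ioc 0 τ) := by
    set b : ℕ → ℝ := fun n => τ - τ / (n + 1) with hbdef
    have hb0 : ∀ n : ℕ, 0 ≤ b n ∧ b n < τ := by
      intro n
      have h1 : 0 < τ / ((n:ℝ) + 1) := div_pos hτ (by positivity)
      have h2 : τ / ((n:ℝ) + 1) ≤ τ := by
        rw [div_le_iff₀ (by positivity)]
        nlinarith [hτ.le]
      constructor <;> simp [hbdef] <;> linarith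
    have hbt : Filter.Tendsto b Filter.atTop (nhds τ) := by
      have h0 : Filter.Tendsto (fun n : ℕ => τ / ((n:ℝ) + 1)) Filter.atTop (nhds 0) := by
        have h1 := tendsto_const_div_atTop_nhds_zero_nat τ
        have h2 := h1.comp (Filter.tendsto_add_atTop_nat 1)
        have h3 : (fun n : ℕ => τ / ((n:ℝ) + 1))
            = (fun n : ℕ => τ / (n:ℝ)) ∘ (fun a : ℕ => a + 1) := by
          funext n
          simp only [Function.comp_apply]
          push_cast
          ring
        rw [h3]
        exact h2
      have h3 := (tendsto_const_nhds (x := τ) (f := Filter.atTop (α := ℕ))).sub h0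
      simpa using h3
    apply MeasureTheory.integrableOn_Ioc_of_intervalIntegral_norm_bounded_right
      (I := F 0 / 4) (b := b) (l := Filter.atTop) ?_ hbt
    · apply Filter.Eventually.of_forall
      intro n
      have hsub : Set.Ioc (0:ℝ) (b n) ⊆ Set.Ico 0 τ :=
        fun s hs => ⟨hs.1.le, lt_of_le_of_lt hs.2 (hb0 n).2⟩
      have heqn : (∫ s in Set.Ioc (0:ℝ) (b n), ‖g s‖) = ∫ s in Set.Ioc (0:ℝ) (b n), g s := by
        apply MeasureTheory.setIntegral_congr_fun measurableSet_Ioc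
        intro s hs
        exact Real.norm_of_nonneg (hgpos s (hsub hs)).le
      rw [heqn, ← intervalIntegral.integral_of_le (hb0 n).1]
      exact hbound (b n) (hb0 n).1 (hb0 n).2
    · intro n
      have hsub2 : Set.Icc (0:ℝ) (b n) ⊆ Set.Ico 0 τ :=
        fun s hs => ⟨hs.1, lt_of_le_of_lt hs.2 (hb0 n).2⟩
      exact ((hgcont.mono hsub2).integrableOn_Icc).mono_set Set.Ioc_subset_Icc_self
  have hIntIoo : MeasureTheory.IntegrableOn g (Set.Ioo 0 τ) :=
    hIntIoc.mono_set Set.Ioo_subset_Ioc_self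
  have hIntIcc : MeasureTheory.IntegrableOn g (Set.Icc 0 τ) := by
    rw [integrableOn_Icc_iff_integrableOn_Ioc]
    exact hIntIoc
  have hφcont : ContinuousOn (fun t => ∫ s in (0:ℝ)..t, g s) (Set.Icc 0 τ) := by
    have h := intervalIntegral.continuousOn_primitive_interval
      (a := (0:ℝ)) (b := τ) (f := g) (μ := MeasureTheory.volume)
      (by rwa [uIcc_of_le hτ.le])
    rwa [uIcc_of_le hτ.le] at h
  have hFeqτ : F τ = F 0 - 4 * ∫ s in (0:ℝ)..τ, g s := by
    have hmem : τ ∈ closure (Set.Ico 0 τ) := by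
      rw [closure_Ico hτ.ne]
      exact ⟨hτ.le, le_rfl⟩
    have hne : (nhdsWithin τ (Set.Ico 0 τ)).NeBot := mem_closure_iff_nhdsWithin_neBot.mp hmem
    have h1 : Filter.Tendsto F (nhdsWithin τ (Set.Ico 0 τ)) (nhds (F τ)) :=
      (hFcont τ (Set.right_mem_Icc.mpr hτ.le)).mono Set.Ico_subset_Icc_self
    have hφτ : Filter.Tendsto (fun t => ∫ s in (0:ℝ)..t, g s) (nhdsWithin τ (Set.Ico 0 τ))
        (nhds (∫ s in (0:ℝ)..τ, g s)) :=
      (hφcont τ (Set.right_mem_Icc.mpr hτ.le)).mono Set.Ico_subset_Icc_self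
    have h2 : Filter.Tendsto (fun t => F 0 - 4 * ∫ s in (0:ℝ)..t, g s)
        (nhdsWithin τ (Set.Ico 0 τ)) (nhds (F 0 - 4 * ∫ s in (0:ℝ)..τ, g s)) :=
      tendsto_const_nhds.sub (hφτ.const_mul 4)
    have heq : ∀ᶠ t in nhdsWithin τ (Set.Ico 0 τ), F t = F 0 - 4 * ∫ s in (0:ℝ)..t, g s := by
      filter_upwards [self_mem_nhdsWithin] with t ht
      exact hFTC t ht.1 ht.2
    exact tendsto_nhds_unique (Filter.Tendsto.congr' heq h1) h2
  have hF0 : F 0 = (y 0 - x 0) ^ 2 := rfl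
  refine ⟨hIntIoo, ?_, ?_⟩
  · intro t ht
    have hFt : F t = F 0 - 4 * ∫ s in (0:ℝ)..t, g s := by
      rcases eq_or_lt_of_le ht.2 with h | h
      · rw [h]; exact hFeqτ
      · exact hFTC t ht.1 h
    have hnn : 0 ≤ y t - x t := by
      rcases eq_or_lt_of_le ht.2 with h | h
      · rw [h, hweldx, hweldy]; simp
      · exact (hyx t ⟨ht.1, h⟩).le
    have harg : (y 0 - x 0) ^ 2 - 4 * (∫ s in (0:ℝ)..t, g s) = (y t - x t) ^ 2 := by
      rw [← hF0, ← hFt]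
    rw [harg, Real.sqrt_sq hnn]
  · have hFτ0 : F τ = 0 := by
      show (y τ - x τ) ^ 2 = 0
      rw [hweldx, hweldy]
      ring
    have h4 : (∫ s in (0:ℝ)..τ,
          4 / (((ξ s - x s) / (y s - x s)) * (1 - (ξ s - x s) / (y s - x s))))
        = 4 * ∫ s in (0:ℝ)..τ, g s := by
      rw [← intervalIntegral.integral_const_mul]
      apply intervalIntegral.integral_congr
      intro s hs
      simp only [hgdef]
      rw [mul_one_div]
    rw [h4, ← hF0]
    linarith [hFeqτ]
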